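/- In Penney's game with patterns of length 3, the pattern 001 beats the pattern 011: μ{ω : T_{001}(ω) < T_{011}(ω)} > 1/2. (Together with the relations 011 beats 110, 110 beats 100, 100 beats 001, this shows the beating relation on length-3 patterns is not transitive.) -/

import Mathlib

open MeasureTheory

/-- The first time the length-3 pattern `p` appears in the bit sequence `ω`
(as `ω n, ω (n+1), ω (n+2)`), or `∞` if it never appears. -/
noncomputable def hitTime (p : Bool × Bool × Bool) (ω : ℕ → Bool) : ℕ∞ :=
  sInf ((fun n : ℕ => (n : ℕ∞)) '' {n : ℕ | (ω n, ω (n + 1), ω (n + 2)) = p})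

/-- `μ` is the fair-coin measure on `ℕ → Bool`, i.e. the product over `ℕ` of the
uniform probability measure on `Bool`: it is characterized by giving each cylinder
set prescribing finitely many coordinates its uniform probability `(1/2)^#coords`. -/
def IsFairCoinMeasure (μ : Measure (ℕ → Bool)) : Prop :=
  ∀ (s : Finset ℕ) (v : ℕ → Bool),
    μ {ω : ℕ → Bool | ∀ i ∈ s, ω i = v i} = (1 / 2 : ENNReal) ^ s.card

/-- A length-7 word (encoded by bits of a natural number `x < 128`) is *good*
if it contains `001` at some position `n` and no `011` at any position `m ≤ n`. -/
def goodWord (x : ℕ) : Bool :=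
  (List.range 5).any fun n =>
    (!x.testBit n && (!x.testBit (n+1) && x.testBit (n+2))) &&
    (List.range (n+1)).all fun m =>
      !(!x.testBit m && (x.testBit (m+1) && x.testBit (m+2)))

lemma goodWord_spec {x : ℕ} (h : goodWord x = true) :
    ∃ n < 5, x.testBit n = false ∧ x.testBit (n+1) = false ∧ x.testBit (n+2) = true ∧
      ∀ m ≤ n, ¬(x.testBit m = false ∧ x.testBit (m+1) = true ∧ x.testBit (m+2) = true) := by
  simp only [goodWord, List.any_eq_true, List.mem_range, Bool.and_eq_true,
    Bool.not_eq_true', List.all_eq_true, Bool.not_eq_true, Bool.and_eq_false_iff,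
    Bool.not_eq_false'] at h
  obtain ⟨n, hn, ⟨h1, h2, h3⟩, h4⟩ := h
  refine ⟨n, hn, h1, h2, h3, fun m hm hcon => ?_⟩
  rcases h4 m (Nat.lt_succ_of_le hm) with h | h | h
  · rw [hcon.1] at h; exact Bool.noConfusion h
  · rw [hcon.2.1] at h; exact Bool.noConfusion h
  · rw [hcon.2.2] at h; exact Bool.noConfusion h

/-- The cylinder set prescribing the first 7 coordinates to match the bits of `x`. -/
def cyl (x : ℕ) : Set (ℕ → Bool) := {ω | ∀ i ∈ Finset.range 7, ω i = x.testBit i}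

lemma cyl_measurable (x : ℕ) : MeasurableSet (cyl x) := by
  have : cyl x = ⋂ i ∈ Finset.range 7, (fun ω : ℕ → Bool => ω i) ⁻¹' {x.testBit i} := by
    ext ω; simp [cyl]
  rw [this]
  exact MeasurableSet.biInter (Finset.range 7).countable_toSet
    (fun i _ => (measurable_pi_apply i) (measurableSet_singleton _))

lemma cyl_subset {x : ℕ} (hx : goodWord x = true) :
    cyl x ⊆ {ω : ℕ → Bool |
      hitTime (false, false, true) ω < hitTime (false, true, true) ω} := by
  intro ω hω
  obtain ⟨n, hn, h1, h2, h3, h4⟩ := goodWord_spec hx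
  have hωi : ∀ i < 7, ω i = x.testBit i := by
    intro i hi; exact hω i (Finset.mem_range.mpr hi)
  have hA : hitTime (false, false, true) ω ≤ (n : ℕ∞) := by
    apply sInf_le
    refine ⟨n, ?_, rfl⟩
    show (ω n, ω (n+1), ω (n+2)) = (false, false, true)
    rw [hωi n (by omega), hωi (n+1) (by omega), hωi (n+2) (by omega), h1, h2, h3]
  have hB : ((n : ℕ∞) + 1) ≤ hitTime (false, true, true) ω := by
    apply le_sInf
    rintro y ⟨m, hm, rfl⟩
    have hm' : (ω m, ω (m+1), ω (m+2)) = (false, true, true) := hm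
    have hnm : n < m := by
      by_contra hc
      push_neg at hc
      apply h4 m hc
      have e1 := hωi m (by omega)
      have e2 := hωi (m+1) (by omega)
      have e3 := hωi (m+2) (by omega)
      rw [e1, e2, e3] at hm'
      exact ⟨(Prod.mk.injEq _ _ _ _).mp hm' |>.1,
        ((Prod.mk.injEq _ _ _ _).mp ((Prod.mk.injEq _ _ _ _).mp hm' |>.2)).1,
        ((Prod.mk.injEq _ _ _ _).mp ((Prod.mk.injEq _ _ _ _).mp hm' |>.2)).2⟩
    show ((n : ℕ∞) + 1) ≤ (m : ℕ∞)
    calc ((n : ℕ∞) + 1) = ((n + 1 : ℕ) : ℕ∞) := by push_cast; ring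
      _ ≤ (m : ℕ∞) := Nat.cast_le.mpr (Nat.succ_le_of_lt hnm)
  calc hitTime (false, false, true) ω ≤ (n : ℕ∞) := hA
    _ < (n : ℕ∞) + 1 := (ENat.lt_add_one_iff (by simp)).mpr le_rfl
    _ ≤ hitTime (false, true, true) ω := hB

lemma cyl_disjoint : Set.PairwiseDisjoint
    ↑((Finset.range 128).filter fun x => goodWord x = true) cyl := by
  intro x hx y hy hxy
  simp only [Finset.coe_filter, Set.mem_setOf_eq, Finset.mem_range] at hx hy
  refine Set.disjoint_left.mpr fun ω hωx hωy => hxy ?_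
  apply Nat.eq_of_testBit_eq
  intro i
  by_cases hi : i < 7
  · rw [← hωx i (Finset.mem_range.mpr hi), ← hωy i (Finset.mem_range.mpr hi)]
  · have hx7 : x < 2 ^ i := lt_of_lt_of_le hx.1 (by
      calc (128:ℕ) = 2^7 := by norm_num
        _ ≤ 2^i := Nat.pow_le_pow_right (by norm_num) (by omega))
    have hy7 : y < 2 ^ i := lt_of_lt_of_le hy.1 (by
      calc (128:ℕ) = 2^7 := by norm_num
        _ ≤ 2^i := Nat.pow_le_pow_right (by norm_num) (by omega))
    rw [Nat.testBit_lt_two_pow hx7, Nat.testBit_lt_two_pow hy7]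

lemma goodWord_card :
    ((Finset.range 128).filter fun x => goodWord x = true).card = 69 := by decide

/-- In Penney's game with patterns of length 3, the pattern `001`
beats the pattern `011`: `μ {ω | T_001 ω < T_011 ω} > 1/2`.  (Together with
`011 > 110 > 100 > 001` this shows the beating relation is not transitive.) -/
theorem penney_001_beats_011 (μ : Measure (ℕ → Bool)) (hμ : IsFairCoinMeasure μ) :
    μ {ω : ℕ → Bool | hitTime (false, false, true) ω < hitTime (false, true, true) ω}
      > 1 / 2 := by
  set S := (Finset.range 128).filter fun x => goodWord x = true with hS
  have hsub : (⋃ x ∈ S, cyl x) ⊆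
      {ω : ℕ → Bool | hitTime (false, false, true) ω < hitTime (false, true, true) ω} := by
    refine Set.iUnion₂_subset fun x hx => ?_
    exact cyl_subset (Finset.mem_filter.mp hx).2
  have hmeasure : μ (⋃ x ∈ S, cyl x) = 69 * (1 / 2 : ENNReal) ^ 7 := by
    rw [measure_biUnion_finset cyl_disjoint (fun x _ => cyl_measurable x)]
    have : ∀ x ∈ S, μ (cyl x) = (1 / 2 : ENNReal) ^ 7 := by
      intro x _
      have := hμ (Finset.range 7) x.testBit
      rwa [Finset.card_range] at this
    rw [Finset.sum_congr rfl this, Finset.sum_const, goodWord_card, nsmul_eq_mul]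
    norm_num
  have hgt : (1 / 2 : ENNReal) < 69 * (1 / 2 : ENNReal) ^ 7 := by
    have h128 : (1 / 2 : ENNReal) ^ 7 = (128 : ENNReal)⁻¹ := by
      rw [one_div, ← ENNReal.inv_pow]; norm_num
    have hkey : ((2 : ENNReal))⁻¹ = 64 * (128 : ENNReal)⁻¹ := by
      rw [show (128 : ENNReal) = 2 * 64 by norm_num,
        ENNReal.mul_inv (by norm_num) (by norm_num), mul_comm (2 : ENNReal)⁻¹ _,
        ← mul_assoc, ENNReal.mul_inv_cancel (by norm_num) (by norm_num), one_mul]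
    rw [h128, one_div, hkey]
    exact (ENNReal.mul_lt_mul_iff_left (by norm_num) (by norm_num)).mpr (by norm_num)
  calc (1 / 2 : ENNReal) < 69 * (1 / 2 : ENNReal) ^ 7 := hgt
    _ = μ (⋃ x ∈ S, cyl x) := hmeasure.symm
    _ ≤ _ := measure_mono hsub
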